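/- Let φ : ℙ² ⇢ ℙ² be a birational map defined on an open set U whose complement is finite, and let g : ℙ² → S be a dominant morphism to a surface such that g ∘ φ = g|_U. If g*O_S(1) ≅ O_{ℙ²}(3) for an ample line bundle O_S(1) on S, then φ extends to a linear automorphism of ℙ². -/

import Mathlib

open MvPolynomial

private lemma comp_mul_zero {k : Type*} [Field k] {c q : MvPolynomial (Fin 3) k} {m N : ℕ}
    (hq : q.IsHomogeneous m) (hF : (c * q).IsHomogeneous N) {d : ℕ} (hd : d + m ≠ N) :
    homogeneousComponent d c * q = 0 := by
  classical
  apply MvPolynomial.ext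
  intro μ
  rw [coeff_zero]
  by_cases hμ : μ.degree = d + m
  · have h0 : coeff μ (c * q) = 0 := hF.coeff_eq_zero (hμ ▸ hd)
    have hsum : c * q = ∑ i ∈ Finset.range (c.totalDegree + 1),
        homogeneousComponent i c * q := by
      rw [← Finset.sum_mul, sum_homogeneousComponent]
    rw [hsum, coeff_sum] at h0
    rw [← h0]
    symm
    apply Finset.sum_eq_single d
    · intro b _ hb
      exact ((homogeneousComponent_isHomogeneous b c).mul hq).coeff_eq_zero
        (by simpa [hμ] using fun h => hb (by omega))
    · intro hd'
      have : homogeneousComponent d c = 0 :=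
        homogeneousComponent_eq_zero _ _ (by simpa using hd')
      rw [this, zero_mul, coeff_zero]
  · exact ((homogeneousComponent_isHomogeneous d c).mul hq).coeff_eq_zero hμ

private lemma hom_factor {k : Type*} [Field k] {c q : MvPolynomial (Fin 3) k} {m N : ℕ}
    (hq : q.IsHomogeneous m) (hq0 : q ≠ 0) (hc0 : c ≠ 0)
    (hF : (c * q).IsHomogeneous N) : m ≤ N ∧ c.IsHomogeneous (N - m) := by
  classical
  have hcomp : ∀ d : ℕ, d + m ≠ N → homogeneousComponent d c = 0 := by
    intro d hd
    have := comp_mul_zero hq hF hd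
    rcases mul_eq_zero.mp this with h | h
    · exact h
    · exact absurd h hq0
  obtain ⟨d₀, hd₀⟩ : ∃ d₀, homogeneousComponent d₀ c ≠ 0 := by
    by_contra h
    push_neg at h
    apply hc0
    rw [← sum_homogeneousComponent c]
    exact Finset.sum_eq_zero fun i _ => h i
  have hdN : d₀ + m = N := by by_contra h; exact hd₀ (hcomp _ h)
  have hmN : m ≤ N := by omega
  have hd₀' : d₀ = N - m := by omega
  have hle : d₀ < c.totalDegree + 1 := by
    by_contra h
    push_neg at h
    exact hd₀ (homogeneousComponent_eq_zero _ _ (by omega))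
  have : c = homogeneousComponent d₀ c := by
    conv_lhs => rw [← sum_homogeneousComponent c]
    apply Finset.sum_eq_single_of_mem d₀ (Finset.mem_range.mpr hle)
    intro b _ hb
    exact hcomp b (by omega)
  refine ⟨hmN, ?_⟩
  rw [this, hd₀' ]
  exact homogeneousComponent_isHomogeneous _ c

private lemma degree_one_struct {k : Type*} [Field k] {p : MvPolynomial (Fin 3) k}
    (hp : p.IsHomogeneous 1) :
    p = ∑ j : Fin 3, C (coeff (Finsupp.single j 1) p) * X j := by
  classical
  apply MvPolynomial.ext
  intro d
  rw [coeff_sum]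
  simp only [coeff_C_mul, coeff_X', mul_ite, mul_one, mul_zero]
  by_cases hd : d.degree = 1
  · -- d = single j₀ 1 for some j₀
    obtain ⟨j₀, hj₀⟩ : ∃ j₀, d = Finsupp.single j₀ 1 := by
      have hne : d.support.Nonempty := by
        rcases Finset.eq_empty_or_nonempty d.support with h | h
        · exfalso
          have : d = 0 := by
            ext a; by_contra ha
            have := Finsupp.mem_support_iff.mpr ha
            rw [h] at this; exact absurd this (Finset.notMem_empty a)
          simp [this, map_zero] at hd
        · exact h
      obtain ⟨j₀, hj₀⟩ := hne
      have hsum : ∑ i ∈ d.support, d i = 1 := hd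
      have h1 : d j₀ + ∑ i ∈ d.support.erase j₀, d i = 1 := by
        rw [Finset.add_sum_erase _ _ hj₀]; exact hsum
      have hdj : d j₀ ≠ 0 := Finsupp.mem_support_iff.mp hj₀
      have h2 : ∑ i ∈ d.support.erase j₀, d i = 0 := by omega
      have h3 : d j₀ = 1 := by omega
      refine ⟨j₀, ?_⟩
      ext a
      by_cases ha : a = j₀
      · simp [ha, h3]
      · rw [Finsupp.single_apply, if_neg (Ne.symm ha)]
        by_contra hda
        have haS : a ∈ d.support.erase j₀ :=
          Finset.mem_erase.mpr ⟨ha, Finsupp.mem_support_iff.mpr hda⟩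
        have := Finset.sum_eq_zero_iff.mp h2 a haS
        exact hda this
    subst hj₀
    rw [Finset.sum_eq_single j₀]
    · rw [if_pos rfl]
    · intro b _ hb
      rw [if_neg]
      intro h
      exact hb ((Finsupp.single_left_inj one_ne_zero).mp h)
    · intro h; simp at h
  · rw [hp.coeff_eq_zero hd]
    symm
    apply Finset.sum_eq_zero
    intro j _
    rw [if_neg]
    intro h
    apply hd
    rw [← h]
    simp [Finsupp.degree_single]

private lemma eval_aeval3 {k : Type*} [Field k] (x : Fin 3 → k)
    (φ : Fin 3 → MvPolynomial (Fin 3) k) (p : MvPolynomial (Fin 3) k) :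
    eval x (aeval φ p) = eval (fun i => eval x (φ i)) p := by
  rw [aeval_def, algebraMap_eq, ← eval_assoc]; rfl

private lemma eval_zero_of_hom {k : Type*} [Field k] {n : ℕ} {c : MvPolynomial (Fin 3) k}
    (h : c.IsHomogeneous n) (hn : n ≠ 0) : eval (0 : Fin 3 → k) c = 0 := by
  rw [eval_zero, constantCoeff_eq]
  exact h.coeff_eq_zero (by simpa [map_zero] using Ne.symm hn)


/-- Let `φ : ℙ² ⇢ ℙ²` be a birational map, defined away from the finite
common zero locus of its coprime homogeneous components `φ₀, φ₁, φ₂` of degree `e ≥ 1`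
(birationality: there is a rational inverse `ψ` with `ψ ∘ φ = h · id` for some `h ≠ 0`),
and let `g : ℙ² → S ⊂ ℙ⁴` be a dominant morphism onto a surface given by base-point-free
homogeneous cubics `g₀,…,g₄` (dominance onto a surface: three of the `gⱼ` are algebraically
independent).  If `g ∘ φ = g` as rational maps, then `φ` extends to a linear automorphism
of `ℙ²`: the `φᵢ` are given by an invertible `3×3` matrix. -/
theorem stmt_10 (k : Type*) [Field k] [IsAlgClosed k] [CharZero k]
    (e e' : ℕ) (he : 1 ≤ e)
    (φ ψ : Fin 3 → MvPolynomial (Fin 3) k)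
    (hφ : ∀ i, (φ i).IsHomogeneous e) (hψ : ∀ i, (ψ i).IsHomogeneous e')
    (hcop : ∀ q : MvPolynomial (Fin 3) k, (∀ i, q ∣ φ i) → IsUnit q)
    (hbir : ∃ h : MvPolynomial (Fin 3) k, h ≠ 0 ∧ ∀ i, aeval φ (ψ i) = h * X i)
    (g : Fin 5 → MvPolynomial (Fin 3) k) (hg : ∀ j, (g j).IsHomogeneous 3)
    (hbpf : ∀ x : Fin 3 → k, x ≠ 0 → ∃ j, eval x (g j) ≠ 0)
    (hsurf : ∃ j₁ j₂ j₃ : Fin 5, AlgebraicIndependent k ![g j₁, g j₂, g j₃])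
    (hinv : ∃ c : MvPolynomial (Fin 3) k, c ≠ 0 ∧ ∀ j, aeval φ (g j) = c * g j) :
    e = 1 ∧ ∃ M : Matrix (Fin 3) (Fin 3) k, IsUnit M.det ∧
      ∀ i, φ i = ∑ j : Fin 3, C (M i j) * X j := by
  classical
  obtain ⟨c, hc0, hcg⟩ := hinv
  -- some g j is nonzero
  obtain ⟨j₁, j₂, j₃, hind⟩ := hsurf
  have hgj : g j₁ ≠ 0 := by
    have := hind.ne_zero 0
    simpa using this
  -- c is homogeneous of degree 3*e - 3
  have hFj : (aeval φ (g j₁)).IsHomogeneous (e * 3) := (hg j₁).aeval φ hφ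
  have hchom : 3 ≤ e * 3 ∧ c.IsHomogeneous (e * 3 - 3) := by
    apply hom_factor (hg j₁) hgj hc0
    rw [← hcg j₁]; exact hFj
  -- common zeros of φ are contained in zeros of c (away from zero it uses bpf)
  have hkey : ∀ x : Fin 3 → k, eval x c = 0 → ∀ i, eval x (φ i) = 0 := by
    intro x hx i
    by_cases hx0 : x = 0
    · subst hx0
      exact eval_zero_of_hom (hφ i) (by omega)
    · by_contra hφx
      have hφx0 : (fun i => eval x (φ i)) ≠ 0 := by
        intro h
        exact hφx (by rw [congrFun h i]; rfl)
      obtain ⟨j, hj⟩ := hbpf _ hφx0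
      apply hj
      have := congrArg (eval x) (hcg j)
      rw [eval_aeval3, eval_mul, hx, zero_mul] at this
      exact this
  -- Main claim : e = 1
  have he1 : e = 1 := by
    by_contra hne
    have he2 : 2 ≤ e := by omega
    have hD : e * 3 - 3 ≠ 0 := by omega
    -- c is not a unit
    have hcu : ¬ IsUnit c := by
      intro h
      obtain ⟨u, hu⟩ := h.exists_right_inv
      have := congrArg (eval (0 : Fin 3 → k)) hu
      rw [eval_mul, eval_zero_of_hom hchom.2 hD, zero_mul, map_one] at this
      exact zero_ne_one this
    obtain ⟨p, hp, hpc⟩ := WfDvdMonoid.exists_irreducible_factor hcu hc0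
    have hprime : Prime p := UniqueFactorizationMonoid.irreducible_iff_prime.mp hp
    -- each φ i vanishes on the zero locus of p
    have hmem : ∀ i, φ i ∈ vanishingIdeal k (zeroLocus k (Ideal.span {p})) := by
      intro i
      rw [mem_vanishingIdeal_iff]
      intro x hx
      have hpx : eval x p = 0 :=
        (mem_zeroLocus_iff.mp hx) p (Ideal.subset_span rfl)
      have hcx : eval x c = 0 := by
        obtain ⟨r, hr⟩ := hpc
        rw [hr, eval_mul, hpx, zero_mul]
      exact hkey x hcx i
    have hrad : vanishingIdeal k (zeroLocus k (Ideal.span {p})) = Ideal.span {p} := by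
      rw [vanishingIdeal_zeroLocus_eq_radical]
      exact (Ideal.span_singleton_prime hprime.ne_zero).mpr hprime |>.radical
    have hdvd : ∀ i, p ∣ φ i := by
      intro i
      have := hmem i
      rw [hrad, Ideal.mem_span_singleton] at this
      exact this
    exact hp.not_isUnit (hcop p hdvd)
  subst he1
  refine ⟨rfl, ?_⟩
  -- c is a nonzero constant
  have hc00 : c.IsHomogeneous 0 := by simpa using hchom.2
  -- the matrix
  set M : Matrix (Fin 3) (Fin 3) k := fun i j => coeff (Finsupp.single j 1) (φ i) with hM
  have hφM : ∀ i, φ i = ∑ j : Fin 3, C (M i j) * X j := fun i => degree_one_struct (hφ i)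
  refine ⟨M, ?_, hφM⟩
  by_contra hdet
  have hdet0 : M.det = 0 := by
    by_contra h; exact hdet (isUnit_iff_ne_zero.mpr h)
  obtain ⟨v, hv0, hv⟩ := (Matrix.exists_mulVec_eq_zero_iff).mpr hdet0
  -- φ vanishes at v
  have hφv : ∀ i, eval v (φ i) = 0 := by
    intro i
    rw [hφM i]
    have := congrFun hv i
    simp only [Matrix.mulVec, dotProduct, Pi.zero_apply] at this
    simpa [eval_sum] using this
  -- c(v) ≠ 0
  have hcv : eval v c ≠ 0 := by
    have hcC : c = C (coeff 0 c) := by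
      apply MvPolynomial.ext
      intro d
      by_cases hd : d = 0
      · subst hd; simp
      · rw [hc00.coeff_eq_zero (by
          rw [Ne, Finsupp.degree_eq_zero_iff]; exact hd), coeff_C, if_neg (Ne.symm hd)]
    rw [hcC, eval_C]
    intro h
    apply hc0
    rw [hcC, h, map_zero]
  -- contradiction with base-point-freeness at v
  obtain ⟨j, hj⟩ := hbpf v hv0
  apply hj
  have := congrArg (eval v) (hcg j)
  rw [eval_aeval3, eval_mul] at this
  have h0 : (fun i => eval v (φ i)) = (0 : Fin 3 → k) := funext hφv
  rw [h0, eval_zero_of_hom (hg j) (by norm_num)] at this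
  exact (mul_eq_zero.mp this.symm).resolve_left hcv
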